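/- arXiv:2101.10686 — 2 statements merged into one kernel-verified Lean document; each statement's English description precedes it below -/
import Mathlib

section
/- For every real number t with |t| < 1, one has the convergent expansion Γ(2, arcsinh t) = 1 − t²/2 + t³/3 − (1/4) Σ_{k=3}^∞ Q(2, k−1; 3) (2t)^{k+1}/(k+1)!, where Γ(a, x) = ∫_x^∞ e^{−u} u^{a−1} du is the upper incomplete gamma function and arcsinh t = ln(t + √(1+t²)) is the inverse hyperbolic sine. -/
/-- Signed Stirling numbers of the first kind: coefficients of the falling factorial,
`x(x-1)⋯(x-n+1) = ∑ₖ s(n,k) xᵏ`. -/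
def stirlingFirst : ℕ → ℕ → ℤ
  | 0, 0 => 1
  | 0, _ + 1 => 0
  | n + 1, 0 => -(n : ℤ) * stirlingFirst n 0
  | n + 1, k + 1 => stirlingFirst n k - (n : ℤ) * stirlingFirst n (k + 1)

/-- `Q m k α = ∑_{ℓ=0}^{k} C(m+ℓ−1, m−1) · s(m+k−1, m+ℓ−1) · ((m+k−α)/2)^ℓ`. -/
noncomputable def Q (m k : ℕ) (α : ℝ) : ℝ :=
  ∑ ℓ ∈ Finset.range (k + 1),
    ((m + ℓ - 1).choose (m - 1) : ℝ) * (stirlingFirst (m + k - 1) (m + ℓ - 1) : ℝ) *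
      (((m : ℝ) + (k : ℝ) - α) / 2) ^ ℓ

/-- The upper incomplete gamma function `Γ(a, x) = ∫_x^∞ e^{−u} u^{a−1} du`
(for a positive integer value of the parameter `a`). -/
noncomputable def incGamma (a : ℕ) (x : ℝ) : ℝ :=
  ∫ u in Set.Ioi x, Real.exp (-u) * u ^ (a - 1)



open Real Set MeasureTheory Filter Topology Finset
open scoped Nat

lemma hasDerivAt_F (u : ℝ) :
    HasDerivAt (fun u : ℝ => -(1 + u) * Real.exp (-u)) (Real.exp (-u) * u) u := by
  have h1 : HasDerivAt (fun u : ℝ => Real.exp (-u)) (-Real.exp (-u)) u := by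
    simpa using ((hasDerivAt_neg u).exp)
  have h2 : HasDerivAt (fun u : ℝ => -(1 + u)) (-1) u := by
    exact ((hasDerivAt_id u).const_add (1:ℝ)).neg
  have := h2.mul h1
  exact this.congr_deriv (by ring)

lemma tendsto_F : Tendsto (fun u : ℝ => -(1 + u) * Real.exp (-u)) atTop (𝓝 0) := by
  have h1 := Real.tendsto_exp_neg_atTop_nhds_zero
  have h2 := Real.tendsto_pow_mul_exp_neg_atTop_nhds_zero 1
  have := (h1.add h2).neg
  simp only [add_zero, neg_zero] at this
  refine this.congr (fun u => ?_)
  simp only [pow_one]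
  ring

lemma incGamma_two (x : ℝ) : (∫ u in Set.Ioi x, Real.exp (-u) * u) = (1 + x) * Real.exp (-x) := by
  have hint0 : IntegrableOn (fun u : ℝ => Real.exp (-u) * u) (Ioi (0:ℝ)) := by
    refine integrableOn_Ioi_deriv_of_nonneg ?_ (fun y hy => hasDerivAt_F y) ?_ tendsto_F
    · exact ((hasDerivAt_F 0).continuousAt.continuousWithinAt)
    · intro y hy
      exact mul_nonneg (Real.exp_pos _).le (le_of_lt hy)
  have hintIoc : IntegrableOn (fun u : ℝ => Real.exp (-u) * u) (Ioc x 0) := by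
    apply Continuous.integrableOn_Ioc
    continuity
  have hint : IntegrableOn (fun u : ℝ => Real.exp (-u) * u) (Ioi x) := by
    refine (hintIoc.union hint0).mono_set ?_
    intro u hu
    rcases le_or_gt u 0 with h | h
    · exact Or.inl ⟨hu, h⟩
    · exact Or.inr h
  have := integral_Ioi_of_hasDerivAt_of_tendsto
    (f := fun u : ℝ => -(1 + u) * Real.exp (-u)) (f' := fun u : ℝ => Real.exp (-u) * u)
    ((hasDerivAt_F x).continuousAt.continuousWithinAt) (fun y _ => hasDerivAt_F y) hint tendsto_F
  rw [this]
  ring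


/-- falling factorial -/
noncomputable def P (n : ℕ) (x : ℝ) : ℝ := ∏ j ∈ range n, (x - j)

/-- derivative of falling factorial, via Stirling numbers -/
noncomputable def G (n : ℕ) (x : ℝ) : ℝ :=
  ∑ ℓ ∈ range n, ((ℓ : ℝ) + 1) * (stirlingFirst n (ℓ + 1) : ℝ) * x ^ ℓ

lemma stirlingFirst_eq_zero : ∀ n k : ℕ, n < k → stirlingFirst n k = 0 := by
  intro n
  induction n with
  | zero => intro k hk; match k, hk with
    | k + 1, _ => rfl
  | succ n ih =>
    intro k hk
    match k, hk with
    | k + 1, hk =>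
      rw [stirlingFirst]
      rw [ih k (by omega), ih (k+1) (by omega)]
      ring

lemma P_eq (n : ℕ) (x : ℝ) :
    P n x = ∑ k ∈ range (n + 1), (stirlingFirst n k : ℝ) * x ^ k := by
  induction n with
  | zero => simp [P, stirlingFirst]
  | succ n ih =>
    have hP : P (n+1) x = P n x * (x - n) := by
      rw [P, P, prod_range_succ]
    rw [hP, ih]
    rw [sum_mul]
    have expand : ∀ k ∈ range (n+1), (stirlingFirst n k : ℝ) * x ^ k * (x - n)
        = (stirlingFirst n k : ℝ) * x ^ (k+1) - (n : ℝ) * (stirlingFirst n k : ℝ) * x ^ k := by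
      intro k _; ring
    rw [sum_congr rfl expand, sum_sub_distrib]
    -- RHS
    have hR : ∑ k ∈ range (n + 2), (stirlingFirst (n+1) k : ℝ) * x ^ k
        = (stirlingFirst (n+1) 0 : ℝ) + ∑ k ∈ range (n+1), (stirlingFirst (n+1) (k+1) : ℝ) * x ^ (k+1) := by
      rw [sum_range_succ' (fun k => (stirlingFirst (n+1) k : ℝ) * x ^ k) (n+1)]
      simp [add_comm]
    rw [hR]
    have recs : ∀ k ∈ range (n+1), (stirlingFirst (n+1) (k+1) : ℝ) * x ^ (k+1)
        = (stirlingFirst n k : ℝ) * x ^ (k+1) - (n : ℝ) * ((stirlingFirst n (k+1) : ℝ) * x ^ (k+1)) := by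
      intro k _
      rw [show stirlingFirst (n+1) (k+1) = stirlingFirst n k - (n : ℤ) * stirlingFirst n (k + 1) from rfl]
      push_cast
      ring
    rw [sum_congr rfl recs, sum_sub_distrib]
    have h0 : (stirlingFirst (n+1) 0 : ℝ) = -(n:ℝ) * (stirlingFirst n 0 : ℝ) := by
      rw [show stirlingFirst (n+1) 0 = -(n : ℤ) * stirlingFirst n 0 from rfl]; push_cast; ring
    rw [h0]
    have hshift : ∑ k ∈ range (n+1), (n : ℝ) * ((stirlingFirst n (k+1) : ℝ) * x ^ (k+1))
        = ∑ k ∈ range (n+1), (n : ℝ) * ((stirlingFirst n k : ℝ) * x ^ k) - (n:ℝ) * (stirlingFirst n 0 : ℝ) := by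
      rw [← mul_sum, ← mul_sum]
      rw [sum_range_succ' (fun k => (stirlingFirst n k : ℝ) * x ^ k) n]
      rw [sum_range_succ (fun k => (stirlingFirst n (k+1) : ℝ) * x^(k+1)) n]
      rw [stirlingFirst_eq_zero n (n+1) (by omega)]
      push_cast
      ring
    rw [hshift]
    have hmuln : ∑ k ∈ range (n+1), (n:ℝ) * (stirlingFirst n k : ℝ) * x ^ k
        = ∑ k ∈ range (n+1), (n:ℝ) * ((stirlingFirst n k : ℝ) * x ^ k) := by
      apply sum_congr rfl; intro k _; ring
    rw [hmuln]
    ring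

lemma G_rec (n : ℕ) (x : ℝ) : G (n + 1) x = (x - n) * G n x + P n x := by
  rw [G]
  have recs : ∀ ℓ ∈ range (n+1), ((ℓ:ℝ)+1) * (stirlingFirst (n+1) (ℓ+1) : ℝ) * x ^ ℓ
      = ((ℓ:ℝ)+1) * (stirlingFirst n ℓ : ℝ) * x ^ ℓ
        - (n:ℝ) * (((ℓ:ℝ)+1) * (stirlingFirst n (ℓ+1) : ℝ) * x ^ ℓ) := by
    intro ℓ _
    rw [show stirlingFirst (n+1) (ℓ+1) = stirlingFirst n ℓ - (n : ℤ) * stirlingFirst n (ℓ + 1) from rfl]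
    push_cast; ring
  rw [sum_congr rfl recs, sum_sub_distrib, ← mul_sum]
  -- second sum: extend to G n x
  have h2 : ∑ ℓ ∈ range (n+1), ((ℓ:ℝ)+1) * (stirlingFirst n (ℓ+1) : ℝ) * x ^ ℓ = G n x := by
    rw [G, sum_range_succ, stirlingFirst_eq_zero n (n+1) (by omega)]
    simp
  rw [h2]
  -- first sum: = x * G n x + P n x
  have h1 : ∑ ℓ ∈ range (n+1), ((ℓ:ℝ)+1) * (stirlingFirst n ℓ : ℝ) * x ^ ℓ
      = x * G n x + P n x := by
    have split : ∀ ℓ ∈ range (n+1), ((ℓ:ℝ)+1) * (stirlingFirst n ℓ : ℝ) * x ^ ℓ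
        = (ℓ:ℝ) * (stirlingFirst n ℓ : ℝ) * x ^ ℓ + (stirlingFirst n ℓ : ℝ) * x ^ ℓ := by
      intro ℓ _; ring
    rw [sum_congr rfl split, sum_add_distrib, ← P_eq]
    congr 1
    rw [G, mul_sum]
    rw [sum_range_succ' (fun ℓ => (ℓ:ℝ) * (stirlingFirst n ℓ : ℝ) * x ^ ℓ) n]
    simp only [Nat.cast_zero, zero_mul, add_zero, Nat.cast_add, Nat.cast_one]
    apply sum_congr rfl
    intro ℓ _
    ring
  rw [h1]
  ring

lemma G_eq_sum_prod (n : ℕ) (x : ℝ) :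
    G n x = ∑ i ∈ range n, ∏ j ∈ (range n).erase i, (x - j) := by
  induction n with
  | zero => simp [G]
  | succ n ih =>
    rw [G_rec, ih]
    rw [sum_range_succ]
    have htop : (range (n+1)).erase n = range n := by
      rw [Finset.range_add_one, Finset.erase_insert (by simp)]
    rw [htop]
    have hP : ∏ j ∈ range n, (x - (j:ℝ)) = P n x := rfl
    rw [hP]
    congr 1
    rw [mul_sum]
    apply sum_congr rfl
    intro i hi
    have hin : i ∈ range (n+1) := by
      simp at hi ⊢; omega
    have hne : i ≠ n := by simp at hi; omega
    have hset : (range (n+1)).erase i = insert n ((range n).erase i) := by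
      rw [Finset.range_add_one, Finset.erase_insert_of_ne hne.symm]
    rw [hset, Finset.prod_insert (by simp)]


lemma Q_eq_G (K : ℕ) : Q 2 K 3 = G (K + 1) (((K : ℝ) - 1) / 2) := by
  rw [Q, G]
  apply sum_congr rfl
  intro ℓ hℓ
  have h1 : (2 + ℓ - 1 : ℕ) = ℓ + 1 := by omega
  have h2 : (2 + K - 1 : ℕ) = K + 1 := by omega
  rw [h1, h2, Nat.choose_one_right]
  push_cast
  ring

/-- Even case: `Q 2 (2m) 3 = ∏_{j<2m} (m - 1/2 - j)`. -/
lemma Q_even (m : ℕ) : Q 2 (2 * m) 3 = ∏ j ∈ range (2 * m), ((m : ℝ) - 1/2 - j) := by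
  rw [Q_eq_G, G_eq_sum_prod]
  set x : ℝ := ((2 * m : ℕ) - 1 : ℝ) / 2 with hx
  have hxval : x = (m : ℝ) - 1/2 := by rw [hx]; push_cast; ring
  have hxne : ∀ i : ℕ, x - i ≠ 0 := by
    intro i
    rw [hxval]
    intro h
    have : (m : ℝ) = (i : ℝ) + 1/2 := by linarith
    have h2 : (2 * m : ℝ) = 2 * i + 1 := by linarith
    have : (2 * m : ℕ) = 2 * i + 1 := by exact_mod_cast h2
    omega
  rw [sum_range_succ]
  have htop : (range (2*m+1)).erase (2*m) = range (2*m) := by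
    rw [Finset.range_add_one, Finset.erase_insert (by simp)]
  rw [htop]
  have hzero : ∑ i ∈ range (2*m), ∏ j ∈ (range (2*m+1)).erase i, (x - j) = 0 := by
    apply Finset.sum_involution (fun i _ => 2*m - 1 - i)
    · intro i hi
      simp only [Finset.mem_range] at hi
      set i' := 2*m - 1 - i with hi'
      have hii' : i' < 2*m := by omega
      -- both products relate to full product
      have hfull : ∀ a : ℕ, a < 2*m+1 → (∏ j ∈ (range (2*m+1)).erase a, (x - j)) * (x - a)
          = ∏ j ∈ range (2*m+1), (x - j) := by
        intro a ha
        exact Finset.prod_erase_mul _ _ (by simp; omega)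
      have e1 := hfull i (by omega)
      have e2 := hfull i' (by omega)
      have hanti : x - (i' : ℝ) = -(x - i) := by
        have hnat : i' + i + 1 = 2*m := by omega
        have hcast : (i' : ℝ) + i + 1 = 2*m := by exact_mod_cast congrArg (Nat.cast : ℕ → ℝ) hnat
        rw [hxval]; linarith
      have e3 : (∏ j ∈ (range (2*m+1)).erase i, (x - j)) * (x - i)
          = (-(∏ j ∈ (range (2*m+1)).erase i', (x - j))) * (x - i) := by
        rw [e1, ← e2, hanti]; ring
      have e4 := mul_right_cancel₀ (hxne i) e3
      linarith [e4]
    · intro i hi _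
      simp only [Finset.mem_range] at hi
      omega
    · intro i hi
      simp only [Finset.mem_range] at hi ⊢
      omega
    · intro i hi
      simp only [Finset.mem_range] at hi
      omega
  rw [hzero, zero_add, hxval]

lemma prod_desc (n : ℕ) : ∏ i ∈ range n, ((n:ℝ) - i) = n ! := by
  induction n with
  | zero => simp
  | succ n ih =>
    have : ∀ i ∈ range (n+1), ((n+1 : ℕ):ℝ) - i = (fun i : ℕ => (n:ℝ) + 1 - i) i := by
      intro i _; push_cast; ring
    rw [prod_congr rfl this, prod_range_succ' (fun i : ℕ => ((n:ℝ) + 1 - i)) n]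
    simp only [Nat.cast_add, Nat.cast_one, Nat.cast_zero]
    have : ∀ i ∈ range n, (n:ℝ) + 1 - ((i:ℝ) + 1) = (n:ℝ) - i := by
      intro i _; ring
    rw [prod_congr rfl this, ih]
    push_cast [Nat.factorial_succ]
    ring

lemma prod_neg_desc (n : ℕ) : ∏ i ∈ range n, (-((i:ℝ) + 1)) = (-1)^n * n ! := by
  induction n with
  | zero => simp
  | succ n ih =>
    rw [prod_range_succ, ih]
    push_cast [Nat.factorial_succ]
    ring

/-- Odd case: `Q 2 (2j+3) 3 = (-1)^j (j+1)! (j+2)!`. -/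
lemma Q_odd (j : ℕ) : Q 2 (2 * j + 3) 3 = (-1:ℝ)^j * (j+1)! * (j+2)! := by
  rw [Q_eq_G, G_eq_sum_prod]
  set x : ℝ := ((2 * j + 3 : ℕ) - 1 : ℝ) / 2 with hx
  have hxval : x = (j : ℝ) + 1 := by rw [hx]; push_cast; ring
  have hsingle : ∑ i ∈ range (2*j+3+1), ∏ k ∈ (range (2*j+3+1)).erase i, (x - k)
      = ∏ k ∈ (range (2*j+3+1)).erase (j+1), (x - k) := by
    apply Finset.sum_eq_single (j+1)
    · intro i hi hne
      apply Finset.prod_eq_zero (i := j+1)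
      · simp only [Finset.mem_erase, Finset.mem_range]
        exact ⟨hne.symm, by omega⟩
      · rw [hxval]; push_cast; ring
    · intro h
      exact absurd (by simp; omega : j+1 ∈ range (2*j+3+1)) h
  rw [hsingle]
  have hset : (range (2*j+3+1)).erase (j+1) = range (j+1) ∪ Ico (j+2) (2*j+4) := by
    ext a
    simp only [Finset.mem_erase, Finset.mem_range, Finset.mem_union, Finset.mem_Ico]
    omega
  rw [hset, Finset.prod_union (by
    rw [Finset.disjoint_left]
    intro a ha hb
    simp only [Finset.mem_range] at ha
    simp only [Finset.mem_Ico] at hb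
    omega)]
  have h1 : ∏ k ∈ range (j+1), (x - k) = ((j+1)! : ℝ) := by
    rw [hxval, ← prod_desc (j+1)]
    apply prod_congr rfl
    intro k _
    push_cast
    ring
  have h2 : ∏ k ∈ Ico (j+2) (2*j+4), (x - k) = (-1:ℝ)^j * (j+2)! := by
    rw [Finset.prod_Ico_eq_prod_range]
    have : ∀ k ∈ range (2*j+4 - (j+2)), x - ((j+2+k : ℕ) : ℝ) = -((k:ℝ)+1) := by
      intro k _
      rw [hxval]; push_cast; ring
    rw [prod_congr rfl this]
    have hcard : 2*j+4 - (j+2) = j+2 := by omega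
    rw [hcard, prod_neg_desc (j+2)]
    have : (-1:ℝ)^(j+2) = (-1:ℝ)^j := by
      rw [pow_add]; norm_num
    rw [this]
  rw [h1, h2]
  ring

noncomputable def dd : ℕ → ℝ
  | 0 => 1
  | n + 1 => -((2*(n:ℝ)+1)/(2*(n:ℝ)+2)) * dd n

noncomputable def cc (n : ℕ) : ℝ := dd n / (2*(n:ℝ)+1)

noncomputable def ee : ℕ → ℝ
  | 0 => 1
  | n + 1 => dd n / (2*(n:ℝ)+2)

noncomputable def hh : ℕ → ℝ
  | 0 => 1
  | 1 => 1/3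
  | n + 2 => -((2*(n:ℝ)+2)/(2*(n:ℝ)+5)) * hh (n+1)

lemma abs_dd_le (n : ℕ) : |dd n| ≤ 1 := by
  induction n with
  | zero => simp [dd]
  | succ n ih =>
    rw [dd, abs_mul, abs_neg, abs_div]
    have h1 : |2*(n:ℝ)+1| = 2*(n:ℝ)+1 := abs_of_nonneg (by positivity)
    have h2 : |2*(n:ℝ)+2| = 2*(n:ℝ)+2 := abs_of_nonneg (by positivity)
    rw [h1, h2]
    have : (2*(n:ℝ)+1)/(2*(n:ℝ)+2) ≤ 1 := by
      rw [div_le_one (by positivity)]; linarith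
    calc (2*(n:ℝ)+1)/(2*(n:ℝ)+2) * |dd n| ≤ 1 * 1 := by
          apply mul_le_mul this ih (abs_nonneg _) zero_le_one
      _ = 1 := one_mul 1

lemma abs_cc_le (n : ℕ) : |cc n| ≤ 1 := by
  rw [cc, abs_div]
  have h2 : |2*(n:ℝ)+1| = 2*(n:ℝ)+1 := abs_of_nonneg (by positivity)
  rw [h2]
  rw [div_le_one (by positivity)]
  calc |dd n| ≤ 1 := abs_dd_le n
    _ ≤ 2*(n:ℝ)+1 := by linarith [Nat.cast_nonneg (α := ℝ) n]

lemma abs_ee_le (n : ℕ) : |ee n| ≤ 1 := by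
  cases n with
  | zero => simp [ee]
  | succ n =>
    rw [ee, abs_div]
    have h2 : |2*(n:ℝ)+2| = 2*(n:ℝ)+2 := abs_of_nonneg (by positivity)
    rw [h2, div_le_one (by positivity)]
    calc |dd n| ≤ 1 := abs_dd_le n
      _ ≤ 2*(n:ℝ)+2 := by linarith [Nat.cast_nonneg (α := ℝ) n]

lemma abs_hh_le (n : ℕ) : |hh n| ≤ 1 := by
  induction n with
  | zero => simp [hh]
  | succ n ih =>
    match n, ih with
    | 0, _ =>
      rw [show hh 1 = 1/3 from rfl]
      rw [abs_of_nonneg (by norm_num : (0:ℝ) ≤ 1/3)]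
      norm_num
    | n + 1, ih =>
      rw [hh, abs_mul, abs_neg, abs_div]
      have h1 : |2*(n:ℝ)+2| = 2*(n:ℝ)+2 := abs_of_nonneg (by positivity)
      have h2 : |2*(n:ℝ)+5| = 2*(n:ℝ)+5 := abs_of_nonneg (by positivity)
      rw [h1, h2]
      have : (2*(n:ℝ)+2)/(2*(n:ℝ)+5) ≤ 1 := by
        rw [div_le_one (by positivity)]; linarith
      calc (2*(n:ℝ)+2)/(2*(n:ℝ)+5) * |hh (n+1)| ≤ 1 * 1 := by
            apply mul_le_mul this ih (abs_nonneg _) zero_le_one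
        _ = 1 := one_mul 1

/-- closed form for the half-integer falling product -/
lemma pm_eq (m : ℕ) : ∏ j ∈ range (2 * m), ((m : ℝ) - 1/2 - j) = dd m * (2*m)! / 4^m := by
  induction m with
  | zero => simp [dd]
  | succ m ih =>
    have step : ∏ j ∈ range (2 * (m+1)), (((m:ℝ)+1) - 1/2 - j)
        = (((m:ℝ) + 1/2) * (-(m:ℝ) - 1/2)) * ∏ j ∈ range (2 * m), ((m : ℝ) - 1/2 - j) := by
      have h1 : (2 * (m+1)) = (2*m+1) + 1 := by ring
      rw [h1, prod_range_succ' (fun j : ℕ => ((m:ℝ)+1) - 1/2 - j)]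
      have h2 : ∀ j ∈ range (2*m+1), ((m:ℝ)+1) - 1/2 - ((j:ℕ)+1 : ℕ) = (m:ℝ) - 1/2 - j := by
        intro j _; push_cast; ring
      rw [prod_congr rfl h2, prod_range_succ]
      push_cast
      ring
    have hcast : ∀ k : ℕ, ((m:ℝ)+1) - 1/2 - k = ((m+1 : ℕ):ℝ) - 1/2 - k := by
      intro k; push_cast; ring
    rw [show ∏ j ∈ range (2 * (m+1)), (((m+1:ℕ):ℝ) - 1/2 - j)
        = ∏ j ∈ range (2 * (m+1)), (((m:ℝ)+1) - 1/2 - j) from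
      prod_congr rfl (fun j _ => (hcast j).symm)]
    rw [step, ih, dd]
    have hfac : ((2*(m+1))! : ℝ) = (2*m+2) * (2*m+1) * (2*m)! := by
      have : 2*(m+1) = (2*m+1) + 1 := by ring
      rw [this, Nat.factorial_succ, Nat.factorial_succ]
      push_cast
      ring
    rw [hfac]
    have h4 : (4:ℝ)^(m+1) = 4 * 4^m := by ring
    rw [h4]
    field_simp
    ring

lemma coeff_even (j : ℕ) (t : ℝ) :
    Q 2 (2*j+2) 3 * (2*t)^(2*j+4) / ((2*j+4)! : ℝ)
      = (4 * cc (j+1) - 4 * ee (j+2)) * t^(2*j+4) := by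
  have h1 : (2*j+2 : ℕ) = 2*(j+1) := by ring
  rw [h1, Q_even, pm_eq]
  rw [cc, show ee (j+2) = dd (j+1) / (2*((j+1:ℕ):ℝ)+2) from rfl]
  have hfac : ((2*(j+1))! : ℝ) ≠ 0 := Nat.cast_ne_zero.2 (Nat.factorial_ne_zero _)
  have hfac2 : ((2*j+4)! : ℝ) = (2*(j:ℝ)+4) * (2*(j:ℝ)+3) * ((2*(j+1))! : ℝ) := by
    have e1 : (2*j+4 : ℕ) = (2*j+3) + 1 := by ring
    have e2 : (2*j+3 : ℕ) = (2*(j+1)) + 1 := by ring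
    rw [e1, Nat.factorial_succ, e2, Nat.factorial_succ]
    push_cast
    ring
  have hpow : (2*t)^(2*j+4) = (2:ℝ)^(2*j+4) * t^(2*j+4) := mul_pow 2 t _
  have hpow2 : (2:ℝ)^(2*j+4) = 16 * 4^j := by
    rw [show (2*j+4 : ℕ) = 2*(j+2) from by ring, pow_mul]
    norm_num
    ring
  have h4 : (4:ℝ)^(j+1) = 4 * 4^j := by ring
  rw [hfac2, hpow, hpow2, h4]
  have h4j : (4:ℝ)^j ≠ 0 := by positivity
  have c1 : 2*((j+1:ℕ):ℝ)+1 = 2*(j:ℝ)+3 := by push_cast; ring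
  have c2 : 2*((j+1:ℕ):ℝ)+2 = 2*(j:ℝ)+4 := by push_cast; ring
  rw [c1, c2]
  have n1 : (2*(j:ℝ)+3) ≠ 0 := by positivity
  have n2 : (2*(j:ℝ)+4) ≠ 0 := by positivity
  field_simp
  ring

lemma odd_num (j : ℕ) :
    ((-1:ℝ)^j * ((j+1)! : ℝ) * ((j+2)! : ℝ)) * 2^(2*j+5) / ((2*j+5)! : ℝ)
      = -4 * hh (j+2) := by
  induction j with
  | zero =>
    rw [show hh 2 = -((2*((0:ℕ):ℝ)+2)/(2*((0:ℕ):ℝ)+5)) * hh 1 from rfl,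
        show hh 1 = 1/3 from rfl]
    norm_num [Nat.factorial]
  | succ j ih =>
    have hh3 : hh (j+1+2) = -((2*((j+1:ℕ):ℝ)+2)/(2*((j+1:ℕ):ℝ)+5)) * hh (j+2) := rfl
    rw [hh3]
    have hhval : hh (j+2) = -(((-1:ℝ)^j * ((j+1)! : ℝ) * ((j+2)! : ℝ)) * 2^(2*j+5) / ((2*j+5)! : ℝ))/4 := by
      rw [ih]; ring
    rw [hhval]
    have f1 : ((j+1+1)! : ℝ) = ((j:ℝ)+2) * ((j+1)! : ℝ) := by
      rw [Nat.factorial_succ]; push_cast; ring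
    have f0 : ((j+2)! : ℝ) = ((j:ℝ)+2) * ((j+1)! : ℝ) := by
      rw [show (j+2 : ℕ) = (j+1)+1 from rfl, Nat.factorial_succ]; push_cast; ring
    have f2 : ((j+1+2)! : ℝ) = ((j:ℝ)+3) * (((j:ℝ)+2) * ((j+1)! : ℝ)) := by
      rw [show (j+1+2 : ℕ) = (j+2)+1 from by ring, Nat.factorial_succ]
      push_cast
      rw [f0]
      ring
    have f3 : ((2*(j+1)+5)! : ℝ) = (2*(j:ℝ)+7) * (2*(j:ℝ)+6) * ((2*j+5)! : ℝ) := by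
      rw [show (2*(j+1)+5 : ℕ) = ((2*j+6)+1) from by ring, Nat.factorial_succ,
          show (2*j+6 : ℕ) = ((2*j+5)+1) from by ring, Nat.factorial_succ]
      push_cast
      ring
    have p1 : ((-1:ℝ))^(j+1) = -((-1:ℝ)^j) := by rw [pow_succ]; ring
    have p2 : (2:ℝ)^(2*(j+1)+5) = 4 * 2^(2*j+5) := by
      rw [show (2*(j+1)+5 : ℕ) = (2*j+5)+2 from by ring, pow_add]
      ring
    rw [f1, f2, f3, p1, p2]
    have n0 : ((2*j+5)! : ℝ) ≠ 0 := Nat.cast_ne_zero.2 (Nat.factorial_ne_zero _)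
    have n1 : (2*(j:ℝ)+7) ≠ 0 := by positivity
    have n2 : (2*(j:ℝ)+6) ≠ 0 := by positivity
    have c1 : 2*((j+1:ℕ):ℝ)+2 = 2*(j:ℝ)+4 := by push_cast; ring
    have c2 : 2*((j+1:ℕ):ℝ)+5 = 2*(j:ℝ)+7 := by push_cast; ring
    rw [c1, c2]
    field_simp
    ring

lemma coeff_odd (j : ℕ) (t : ℝ) :
    Q 2 (2*j+3) 3 * (2*t)^(2*j+5) / ((2*j+5)! : ℝ)
      = (-4 * hh (j+2)) * t^(2*j+5) := by
  rw [Q_odd, ← odd_num j]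
  rw [mul_pow]
  ring

section generic

variable {a : ℕ → ℝ}

lemma summable_aux (ha : ∀ n, |a n| ≤ 1) (s : ℕ) {y : ℝ} (hy : |y| < 1) :
    Summable (fun n => a n * y ^ (2*n+s)) := by
  have hy2 : |y|^2 < 1 := by nlinarith [abs_nonneg y]
  apply Summable.of_norm_bounded (g := fun n => |y|^s * (|y|^2)^n)
  · exact (summable_geometric_of_lt_one (by positivity) hy2).mul_left _
  · intro n
    rw [Real.norm_eq_abs, abs_mul, abs_pow]
    have : |y|^(2*n+s) = |y|^s * (|y|^2)^n := by
      rw [pow_add, ← pow_mul]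
      ring
    rw [this]
    have h1 : |a n| * (|y|^s * (|y|^2)^n) ≤ 1 * (|y|^s * (|y|^2)^n) := by
      apply mul_le_mul_of_nonneg_right (ha n) (by positivity)
    linarith

lemma summable_deriv_bound (s : ℕ) {r : ℝ} (hr0 : 0 < r) (hr : r < 1) :
    Summable (fun n => ((2*n+s : ℕ) : ℝ) * r ^ (2*n+s-1)) := by
  have h1 : Summable (fun n : ℕ => (n:ℝ) * r^n) := by
    simpa using summable_pow_mul_geometric_of_norm_lt_one 1
      (by rwa [Real.norm_eq_abs, abs_of_pos hr0] : ‖r‖ < 1)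
  have h2 : Summable (fun n : ℕ => r^n) := summable_geometric_of_lt_one hr0.le hr
  have hg : Summable (fun n : ℕ => ((s:ℝ)+2) * ((n:ℝ)*r^n + r^n)) :=
    ((h1.add h2).mul_left _)
  apply Summable.of_nonneg_of_le _ _ hg
  · intro n; positivity
  · intro n
    rcases Nat.eq_zero_or_pos (2*n+s) with h | h
    · rw [h]
      simp only [Nat.cast_zero, zero_mul]
      positivity
    · have hexp : r^(2*n+s-1) ≤ r^n := by
        apply pow_le_pow_of_le_one hr0.le hr.le
        omega
      have hco : ((2*n+s : ℕ) : ℝ) ≤ ((s:ℝ)+2) * ((n:ℝ)+1) := by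
        push_cast
        nlinarith [Nat.cast_nonneg (α := ℝ) n, Nat.cast_nonneg (α := ℝ) s]
      calc ((2*n+s : ℕ) : ℝ) * r ^ (2*n+s-1) ≤ (((s:ℝ)+2) * ((n:ℝ)+1)) * r^n := by
            apply mul_le_mul hco hexp (by positivity) (by positivity)
        _ = ((s:ℝ)+2) * ((n:ℝ)*r^n + r^n) := by ring

lemma summable_deriv_aux (ha : ∀ n, |a n| ≤ 1) (s : ℕ) {y : ℝ} (hy : |y| < 1) :
    Summable (fun n => a n * ((2*n+s : ℕ) : ℝ) * y ^ (2*n+s-1)) := by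
  set r : ℝ := (1 + |y|)/2 with hrdef
  have hr0 : 0 < r := by positivity
  have hr1 : r < 1 := by simp only [hrdef]; linarith
  have hyr : |y| ≤ r := by simp only [hrdef]; linarith [abs_nonneg y]
  apply Summable.of_norm_bounded (g := fun n => ((2*n+s : ℕ) : ℝ) * r ^ (2*n+s-1))
    (summable_deriv_bound s hr0 hr1)
  intro n
  rw [Real.norm_eq_abs, abs_mul, abs_mul, abs_pow]
  have h1 : |((2*n+s : ℕ) : ℝ)| = ((2*n+s : ℕ) : ℝ) := abs_of_nonneg (Nat.cast_nonneg _)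
  rw [h1]
  have h2 : |y|^(2*n+s-1) ≤ r^(2*n+s-1) := pow_le_pow_left₀ (abs_nonneg y) hyr _
  calc |a n| * ((2*n+s : ℕ) : ℝ) * |y|^(2*n+s-1)
      ≤ 1 * ((2*n+s : ℕ) : ℝ) * r^(2*n+s-1) := by
        apply mul_le_mul (mul_le_mul_of_nonneg_right (ha n) (Nat.cast_nonneg _)) h2
          (by positivity) (by positivity)
    _ = ((2*n+s : ℕ) : ℝ) * r^(2*n+s-1) := by ring

lemma hasDerivAt_tsum_pow (ha : ∀ n, |a n| ≤ 1) (s : ℕ) {y : ℝ} (hy : |y| < 1) :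
    HasDerivAt (fun z => ∑' n, a n * z ^ (2*n+s))
      (∑' n, a n * ((2*n+s : ℕ) : ℝ) * y ^ (2*n+s-1)) y := by
  set r : ℝ := (1 + |y|)/2 with hrdef
  have hr0 : 0 < r := by positivity
  have hr1 : r < 1 := by simp only [hrdef]; linarith
  have hyr : |y| < r := by simp only [hrdef]; linarith [abs_nonneg y]
  have hmem : ∀ z : ℝ, z ∈ Metric.ball (0:ℝ) r ↔ |z| < r := by
    intro z
    rw [Metric.mem_ball, Real.dist_eq, sub_zero]
  apply hasDerivAt_tsum_of_isPreconnected
    (u := fun n => ((2*n+s : ℕ) : ℝ) * r ^ (2*n+s-1))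
    (summable_deriv_bound s hr0 hr1) (Metric.isOpen_ball)
    ((convex_ball (0:ℝ) r).isPreconnected)
    (g' := fun n z => a n * ((2*n+s : ℕ) : ℝ) * z ^ (2*n+s-1))
    (y₀ := 0)
  · intro n z hz
    have := (hasDerivAt_pow (2*n+s) z).const_mul (a n)
    refine this.congr_deriv ?_
    push_cast
    ring
  · intro n z hz
    rw [hmem] at hz
    rw [Real.norm_eq_abs, abs_mul, abs_mul, abs_pow,
      abs_of_nonneg (Nat.cast_nonneg (α := ℝ) (2*n+s))]
    have h2 : |z|^(2*n+s-1) ≤ r^(2*n+s-1) := pow_le_pow_left₀ (abs_nonneg z) hz.le _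
    calc |a n| * ((2*n+s : ℕ) : ℝ) * |z|^(2*n+s-1)
        ≤ 1 * ((2*n+s : ℕ) : ℝ) * r^(2*n+s-1) := by
          apply mul_le_mul (mul_le_mul_of_nonneg_right (ha n) (Nat.cast_nonneg _)) h2
            (by positivity) (by positivity)
      _ = ((2*n+s : ℕ) : ℝ) * r^(2*n+s-1) := by ring
  · rw [hmem]
    simpa using hr0
  · exact summable_aux ha s (by simp : |(0:ℝ)| < 1)
  · rw [hmem]; exact hyr

end generic

noncomputable def Usum (y : ℝ) : ℝ := ∑' n, dd n * y^(2*n)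
noncomputable def TUsum (y : ℝ) : ℝ := ∑' n, dd n * ((2*n : ℕ) : ℝ) * y^(2*n-1)

lemma Usum_hasSum {y : ℝ} (hy : |y| < 1) : HasSum (fun n => dd n * y^(2*n)) (Usum y) := by
  have h := summable_aux abs_dd_le 0 hy
  simp only [Nat.add_zero] at h
  exact h.hasSum

lemma TUsum_hasSum {y : ℝ} (hy : |y| < 1) :
    HasSum (fun n => dd n * ((2*n : ℕ) : ℝ) * y^(2*n-1)) (TUsum y) := by
  have h := summable_deriv_aux abs_dd_le 0 hy
  simp only [Nat.add_zero] at h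
  exact h.hasSum

lemma Usum_hasDerivAt {y : ℝ} (hy : |y| < 1) : HasDerivAt Usum (TUsum y) y := by
  have h := hasDerivAt_tsum_pow abs_dd_le 0 hy
  simp only [Nat.add_zero] at h
  exact h

lemma Usum_zero : Usum 0 = 1 := by
  rw [Usum, tsum_eq_single 0]
  · simp [dd]
  · intro n hn
    rw [zero_pow (by omega : 2*n ≠ 0), mul_zero]

/-- the key recurrence relation for the derivative of `Usum` -/
lemma TU_rel {y : ℝ} (hy : |y| < 1) : (1 + y^2) * TUsum y + y * Usum y = 0 := by
  have hT := TUsum_hasSum hy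
  have hU := Usum_hasSum hy
  -- shifted form of TUsum
  have hshift : HasSum (fun n => dd (n+1) * ((2*(n+1) : ℕ) : ℝ) * y^(2*(n+1)-1)) (TUsum y) := by
    apply (hasSum_nat_add_iff (f := fun n => dd n * ((2*n : ℕ) : ℝ) * y^(2*n-1)) 1).2
    simpa using hT
  have hfun1 : (fun n : ℕ => dd (n+1) * ((2*(n+1) : ℕ) : ℝ) * y^(2*(n+1)-1))
      = (fun n : ℕ => (2*(n:ℝ)+2) * dd (n+1) * y^(2*n+1)) := by
    funext n
    have e : 2*(n+1)-1 = 2*n+1 := by omega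
    rw [e]
    push_cast
    ring
  rw [hfun1] at hshift
  have hT2 : HasSum (fun n : ℕ => 2*(n:ℝ) * dd n * y^(2*n+1)) (y^2 * TUsum y) := by
    have h := hT.mul_left (y^2)
    have hfun2 : (fun n : ℕ => y^2 * (dd n * ((2*n : ℕ) : ℝ) * y^(2*n-1)))
        = (fun n : ℕ => 2*(n:ℝ) * dd n * y^(2*n+1)) := by
      funext n
      match n with
      | 0 => simp
      | n + 1 =>
        have e : 2*(n+1)-1 = 2*n+1 := by omega
        rw [e]
        push_cast
        ring
    rwa [hfun2] at h
  have hU2 : HasSum (fun n : ℕ => dd n * y^(2*n+1)) (y * Usum y) := by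
    have h := hU.mul_left y
    have hfun3 : (fun n : ℕ => y * (dd n * y^(2*n)))
        = (fun n : ℕ => dd n * y^(2*n+1)) := by
      funext n
      rw [pow_succ]
      ring
    rwa [hfun3] at h
  have htot := hshift.add (hT2.add hU2)
  have hfun4 : (fun n : ℕ => (2*(n:ℝ)+2) * dd (n+1) * y^(2*n+1)
      + (2*(n:ℝ) * dd n * y^(2*n+1) + dd n * y^(2*n+1))) = (fun _ : ℕ => (0:ℝ)) := by
    funext n
    have hd : dd (n+1) = -((2*(n:ℝ)+1)/(2*(n:ℝ)+2)) * dd n := rfl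
    have hne : (2*(n:ℝ)+2) ≠ 0 := by positivity
    rw [hd]
    field_simp
    ring
  rw [hfun4] at htot
  have := hasSum_zero.unique htot
  linarith [this]

lemma sqrt1p_pos (z : ℝ) : 0 < Real.sqrt (1+z^2) := Real.sqrt_pos.2 (by positivity)

lemma hasDerivAt_sqrt1p (z : ℝ) :
    HasDerivAt (fun w : ℝ => Real.sqrt (1+w^2)) (z / Real.sqrt (1+z^2)) z := by
  have inner : HasDerivAt (fun w : ℝ => 1 + w^2) (2*z) z := by
    simpa using ((hasDerivAt_pow 2 z).const_add 1)
  have h := (Real.hasDerivAt_sqrt (by positivity : (1:ℝ)+z^2 ≠ 0)).comp z inner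
  refine h.congr_deriv ?_
  field_simp

/-- zero-derivative principle on the ball of radius `(1+|y|)/2` -/
lemma eq_of_zero_deriv {y : ℝ} (hy : |y| < 1) (N : ℝ → ℝ)
    (hN : ∀ z : ℝ, |z| < 1 → HasDerivAt N 0 z) : N y = N 0 := by
  set r : ℝ := (1 + |y|)/2 with hrdef
  have hr1 : r < 1 := by simp only [hrdef]; linarith
  have hmem : ∀ z : ℝ, z ∈ Metric.ball (0:ℝ) r ↔ |z| < r := by
    intro z
    rw [Metric.mem_ball, Real.dist_eq, sub_zero]
  have key : ∀ z ∈ Metric.ball (0:ℝ) r,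
      HasFDerivWithinAt N ((1 : ℝ →L[ℝ] ℝ).smulRight (0:ℝ)) (Metric.ball (0:ℝ) r) z := by
    intro z hz
    rw [hmem] at hz
    exact (hN z (lt_trans hz hr1)).hasFDerivAt.hasFDerivWithinAt
  have bound : ∀ z ∈ Metric.ball (0:ℝ) r, ‖(1 : ℝ →L[ℝ] ℝ).smulRight (0:ℝ)‖ ≤ (0:ℝ) := by
    intro z _
    simp
  have h0mem : (0:ℝ) ∈ Metric.ball (0:ℝ) r := by rw [hmem]; simp only [abs_zero]; positivity
  have hymem : y ∈ Metric.ball (0:ℝ) r := by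
    rw [hmem]
    simp only [hrdef]
    linarith [abs_nonneg y]
  have := Convex.norm_image_sub_le_of_norm_hasFDerivWithin_le key bound
    (convex_ball (0:ℝ) r) h0mem hymem
  simp only [zero_mul, Real.norm_eq_abs] at this
  have h2 := abs_nonneg (N y - N 0)
  have : N y - N 0 = 0 := by
    apply abs_eq_zero.1
    linarith
  linarith

lemma Usum_mul_sqrt {y : ℝ} (hy : |y| < 1) : Usum y * Real.sqrt (1+y^2) = 1 := by
  have hN : ∀ z : ℝ, |z| < 1 → HasDerivAt (fun w => Usum w * Real.sqrt (1+w^2)) 0 z := by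
    intro z hz
    have h := (Usum_hasDerivAt hz).mul (hasDerivAt_sqrt1p z)
    have hs := sqrt1p_pos z
    have hval : TUsum z * Real.sqrt (1+z^2) + Usum z * (z / Real.sqrt (1+z^2)) = 0 := by
      have hself : Real.sqrt (1+z^2) * Real.sqrt (1+z^2) = 1 + z^2 :=
        Real.mul_self_sqrt (by positivity)
      have hrel := TU_rel hz
      have expand : TUsum z * Real.sqrt (1+z^2) + Usum z * (z / Real.sqrt (1+z^2))
          = ((1+z^2) * TUsum z + z * Usum z)/Real.sqrt (1+z^2) := by
        rw [eq_div_iff hs.ne', add_mul, mul_assoc (Usum z), div_mul_cancel₀ _ hs.ne',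
          mul_assoc, hself]
        ring
      rw [expand, hrel, zero_div]
    rwa [hval] at h
  have := eq_of_zero_deriv hy _ hN
  rw [this, Usum_zero]
  norm_num

lemma Usum_eq {y : ℝ} (hy : |y| < 1) : Usum y = (Real.sqrt (1+y^2))⁻¹ := by
  have hs := (sqrt1p_pos y).ne'
  field_simp
  exact Usum_mul_sqrt hy

noncomputable def Asum (y : ℝ) : ℝ := ∑' n, cc n * y^(2*n+1)

lemma Asum_hasSum {y : ℝ} (hy : |y| < 1) : HasSum (fun n => cc n * y^(2*n+1)) (Asum y) :=
  (summable_aux abs_cc_le 1 hy).hasSum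

lemma Asum_hasDerivAt {y : ℝ} (hy : |y| < 1) : HasDerivAt Asum (Usum y) y := by
  have h := hasDerivAt_tsum_pow abs_cc_le 1 hy
  have hfun : (fun n : ℕ => cc n * ((2*n+1 : ℕ) : ℝ) * y^(2*n+1-1))
      = (fun n : ℕ => dd n * y^(2*n)) := by
    funext n
    have e : 2*n+1-1 = 2*n := by omega
    rw [e, cc]
    have hne : (2*(n:ℝ)+1) ≠ 0 := by positivity
    push_cast
    field_simp
  rw [hfun] at h
  exact h

lemma Asum_zero : Asum 0 = 0 := by
  rw [Asum]
  convert tsum_zero with n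
  rw [zero_pow (by omega : 2*n+1 ≠ 0), mul_zero]

lemma Asum_eq {y : ℝ} (hy : |y| < 1) : Asum y = Real.arsinh y := by
  have hN : ∀ z : ℝ, |z| < 1 → HasDerivAt (fun w => Asum w - Real.arsinh w) 0 z := by
    intro z hz
    have h := (Asum_hasDerivAt hz).sub (Real.hasDerivAt_arsinh z)
    rwa [Usum_eq hz, sub_self] at h
  have := eq_of_zero_deriv hy _ hN
  rw [Asum_zero, Real.arsinh_zero, sub_zero] at this
  linarith [this]

noncomputable def Esum (y : ℝ) : ℝ := ∑' n, ee n * y^(2*n)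

lemma Esum_hasSum {y : ℝ} (hy : |y| < 1) : HasSum (fun n => ee n * y^(2*n)) (Esum y) := by
  have h := summable_aux abs_ee_le 0 hy
  simp only [Nat.add_zero] at h
  exact h.hasSum

lemma Esum_zero : Esum 0 = 1 := by
  rw [Esum, tsum_eq_single 0]
  · simp [ee]
  · intro n hn
    rw [zero_pow (by omega : 2*n ≠ 0), mul_zero]

lemma Esum_hasDerivAt {y : ℝ} (hy : |y| < 1) : HasDerivAt Esum (y * Usum y) y := by
  have h := hasDerivAt_tsum_pow abs_ee_le 0 hy
  simp only [Nat.add_zero] at h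
  have hTE : HasSum (fun n : ℕ => ee n * ((2*n : ℕ) : ℝ) * y^(2*n-1))
      (∑' n, ee n * ((2*n : ℕ) : ℝ) * y^(2*n-1)) := by
    have hs := summable_deriv_aux abs_ee_le 0 hy
    simp only [Nat.add_zero] at hs
    exact hs.hasSum
  -- identify the derivative sum with y * Usum y
  have hshift : HasSum (fun n : ℕ => ee (n+1) * ((2*(n+1) : ℕ) : ℝ) * y^(2*(n+1)-1))
      (∑' n, ee n * ((2*n : ℕ) : ℝ) * y^(2*n-1)) := by
    apply (hasSum_nat_add_iff (f := fun n => ee n * ((2*n : ℕ) : ℝ) * y^(2*n-1)) 1).2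
    simpa using hTE
  have hfun : (fun n : ℕ => ee (n+1) * ((2*(n+1) : ℕ) : ℝ) * y^(2*(n+1)-1))
      = (fun n : ℕ => dd n * y^(2*n+1)) := by
    funext n
    have e : 2*(n+1)-1 = 2*n+1 := by omega
    rw [e, show ee (n+1) = dd n / (2*(n:ℝ)+2) from rfl]
    have hne : (2*(n:ℝ)+2) ≠ 0 := by positivity
    push_cast
    field_simp
  rw [hfun] at hshift
  have hU2 : HasSum (fun n : ℕ => dd n * y^(2*n+1)) (y * Usum y) := by
    have h2 := (Usum_hasSum hy).mul_left y
    have hfun3 : (fun n : ℕ => y * (dd n * y^(2*n)))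
        = (fun n : ℕ => dd n * y^(2*n+1)) := by
      funext n
      rw [pow_succ]
      ring
    rwa [hfun3] at h2
  rw [← hU2.unique hshift] at h
  exact h

lemma Esum_eq {y : ℝ} (hy : |y| < 1) : Esum y = Real.sqrt (1+y^2) := by
  have hN : ∀ z : ℝ, |z| < 1 → HasDerivAt (fun w => Esum w - Real.sqrt (1+w^2)) 0 z := by
    intro z hz
    have h := (Esum_hasDerivAt hz).sub (hasDerivAt_sqrt1p z)
    have : z * Usum z - z / Real.sqrt (1+z^2) = 0 := by
      rw [Usum_eq hz]
      rw [div_eq_mul_inv]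
      ring
    rwa [this] at h
  have := eq_of_zero_deriv hy _ hN
  simp only [ne_eq, OfNat.ofNat_ne_zero, not_false_eq_true, zero_pow, add_zero,
    Real.sqrt_one] at this
  rw [Esum_zero] at this
  linarith [this]

noncomputable def Hsum (y : ℝ) : ℝ := ∑' n, hh n * y^(2*n+1)
noncomputable def THsum (y : ℝ) : ℝ := ∑' n, hh n * (2*(n:ℝ)+1) * y^(2*n)

lemma hh_deriv_fun (y : ℝ) : (fun n : ℕ => hh n * ((2*n+1 : ℕ) : ℝ) * y^(2*n+1-1))
    = (fun n : ℕ => hh n * (2*(n:ℝ)+1) * y^(2*n)) := by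
  funext n
  have e : 2*n+1-1 = 2*n := by omega
  rw [e]
  push_cast
  ring

lemma Hsum_hasSum {y : ℝ} (hy : |y| < 1) : HasSum (fun n => hh n * y^(2*n+1)) (Hsum y) :=
  (summable_aux abs_hh_le 1 hy).hasSum

lemma THsum_hasSum {y : ℝ} (hy : |y| < 1) :
    HasSum (fun n => hh n * (2*(n:ℝ)+1) * y^(2*n)) (THsum y) := by
  have hs := (summable_deriv_aux abs_hh_le 1 hy).hasSum
  rwa [hh_deriv_fun y] at hs

lemma Hsum_hasDerivAt {y : ℝ} (hy : |y| < 1) : HasDerivAt Hsum (THsum y) y := by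
  have h := hasDerivAt_tsum_pow abs_hh_le 1 hy
  rwa [hh_deriv_fun y] at h

lemma Hsum_zero : Hsum 0 = 0 := by
  rw [Hsum]
  convert tsum_zero with n
  rw [zero_pow (by omega : 2*n+1 ≠ 0), mul_zero]

/-- key relation `(1+y²)H' − (1+y²) − yH = 0` -/
lemma TH_rel {y : ℝ} (hy : |y| < 1) :
    (1 + y^2) * THsum y - (1 + y^2) - y * Hsum y = 0 := by
  have hTH := THsum_hasSum hy
  have hH := Hsum_hasSum hy
  -- shifted
  have hshift : HasSum (fun n : ℕ => hh (n+1) * (2*(n:ℝ)+3) * y^(2*n+2)) (THsum y - 1) := by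
    have h2 : HasSum (fun n : ℕ => hh (n+1) * (2*((n+1:ℕ):ℝ)+1) * y^(2*(n+1)))
        (THsum y - 1) := by
      apply (hasSum_nat_add_iff (f := fun n => hh n * (2*(n:ℝ)+1) * y^(2*n)) 1).2
      have : THsum y - 1 + ∑ i ∈ range 1, hh i * (2*(i:ℝ)+1) * y^(2*i) = THsum y := by
        simp [hh]
      rwa [this]
    have hfun : (fun n : ℕ => hh (n+1) * (2*((n+1:ℕ):ℝ)+1) * y^(2*(n+1)))
        = (fun n : ℕ => hh (n+1) * (2*(n:ℝ)+3) * y^(2*n+2)) := by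
      funext n
      have e : 2*(n+1) = 2*n+2 := by omega
      rw [e]
      push_cast
      ring
    rwa [hfun] at h2
  have hTH2 : HasSum (fun n : ℕ => hh n * (2*(n:ℝ)+1) * y^(2*n+2)) (y^2 * THsum y) := by
    have h := hTH.mul_left (y^2)
    have hfun : (fun n : ℕ => y^2 * (hh n * (2*(n:ℝ)+1) * y^(2*n)))
        = (fun n : ℕ => hh n * (2*(n:ℝ)+1) * y^(2*n+2)) := by
      funext n
      rw [pow_add]
      ring
    rwa [hfun] at h
  have hH2 : HasSum (fun n : ℕ => hh n * y^(2*n+2)) (y * Hsum y) := by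
    have h := hH.mul_left y
    have hfun : (fun n : ℕ => y * (hh n * y^(2*n+1)))
        = (fun n : ℕ => hh n * y^(2*n+2)) := by
      funext n
      rw [pow_succ]
      ring
    rwa [hfun] at h
  have hIte : HasSum (fun n : ℕ => if n = 0 then y^2 else 0) (y^2) := hasSum_ite_eq 0 (y^2)
  have htot := (hshift.add hTH2).sub (hH2.add hIte)
  have hfun4 : (fun n : ℕ => (hh (n+1) * (2*(n:ℝ)+3) * y^(2*n+2) + hh n * (2*(n:ℝ)+1) * y^(2*n+2))
      - (hh n * y^(2*n+2) + if n = 0 then y^2 else 0)) = (fun _ : ℕ => (0:ℝ)) := by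
    funext n
    match n with
    | 0 =>
      simp only [if_pos rfl]
      rw [show hh 1 = 1/3 from rfl, show hh 0 = 1 from rfl]
      push_cast
      ring
    | n + 1 =>
      simp only [if_neg (Nat.succ_ne_zero n)]
      rw [show hh (n+2) = -((2*(n:ℝ)+2)/(2*(n:ℝ)+5)) * hh (n+1) from rfl]
      have hne : (2*(n:ℝ)+5) ≠ 0 := by positivity
      push_cast
      field_simp
      ring
  rw [hfun4] at htot
  have := hasSum_zero.unique htot
  nlinarith [this]

lemma Hsum_eq {y : ℝ} (hy : |y| < 1) : Hsum y = Real.arsinh y * Real.sqrt (1+y^2) := by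
  have hN : ∀ z : ℝ, |z| < 1 →
      HasDerivAt (fun w => Hsum w * Usum w - Real.arsinh w) 0 z := by
    intro z hz
    have h := ((Hsum_hasDerivAt hz).mul (Usum_hasDerivAt hz)).sub (Real.hasDerivAt_arsinh z)
    have h1p : (1:ℝ) + z^2 ≠ 0 := by positivity
    have hTU : (1 + z^2) * TUsum z = -(z * Usum z) := by
      have := TU_rel hz
      linarith
    have hW := TH_rel hz
    have hinv : (Real.sqrt (1+z^2))⁻¹ = Usum z := (Usum_eq hz).symm
    have hval : THsum z * Usum z + Hsum z * TUsum z - (Real.sqrt (1+z^2))⁻¹ = 0 := by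
      rw [hinv]
      have hTUval : TUsum z = -(z * Usum z) / (1 + z^2) := by
        rw [eq_div_iff h1p]
        linarith [hTU]
      rw [hTUval]
      have hTHval : THsum z = ((1+z^2) + z * Hsum z) / (1+z^2) := by
        rw [eq_div_iff h1p]
        nlinarith [hW]
      rw [hTHval]
      field_simp
      ring
    rwa [hval] at h
  have heq := eq_of_zero_deriv hy _ hN
  rw [Hsum_zero, Real.arsinh_zero, Usum_zero, zero_mul, zero_sub, neg_zero] at heq
  -- heq : Hsum y * Usum y - arsinh y = 0
  have h2 : Hsum y * Usum y = Real.arsinh y := by linarith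
  have h3 := Usum_mul_sqrt hy
  calc Hsum y = Hsum y * (Usum y * Real.sqrt (1+y^2)) := by rw [h3]; ring
    _ = (Hsum y * Usum y) * Real.sqrt (1+y^2) := by ring
    _ = Real.arsinh y * Real.sqrt (1+y^2) := by rw [h2]

/-- `Γ(2, arcsinh t) = 1 − t²/2 + t³/3 − (1/4) ∑_{k=3}^∞ Q(2, k−1; 3) (2t)^{k+1}/(k+1)!`. -/
theorem incGamma_two_arsinh (t : ℝ) (ht : |t| < 1) :
    ∃ S : ℝ,
      HasSum (fun k : ℕ =>
        Q 2 (k + 3 - 1) 3 * (2 * t) ^ (k + 3 + 1) / ((k + 3 + 1).factorial : ℝ)) S ∧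
      incGamma 2 (Real.arsinh t) = 1 - t ^ 2 / 2 + t ^ 3 / 3 - 1 / 4 * S := by
  set a := Real.arsinh t with ha
  set s := Real.sqrt (1 + t^2) with hs
  set f : ℕ → ℝ := fun k => Q 2 (k + 3 - 1) 3 * (2 * t) ^ (k + 3 + 1) / ((k + 3 + 1).factorial : ℝ)
    with hf
  -- base series
  have hA : HasSum (fun n => cc n * t^(2*n+1)) a := by
    rw [ha, ← Asum_eq ht]
    exact Asum_hasSum ht
  have hE : HasSum (fun n => ee n * t^(2*n)) s := by
    rw [hs, ← Esum_eq ht]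
    exact Esum_hasSum ht
  have hH : HasSum (fun n => hh n * t^(2*n+1)) (a * s) := by
    rw [ha, hs, ← Hsum_eq ht]
    exact Hsum_hasSum ht
  -- even part
  have hc1 : HasSum (fun n => 4 * cc n * t^(2*n+2)) (4*t*a) := by
    have h := hA.mul_left (4*t)
    have hfun : (fun n : ℕ => 4*t*(cc n * t^(2*n+1))) = (fun n : ℕ => 4 * cc n * t^(2*n+2)) := by
      funext n
      rw [pow_succ]
      ring
    rwa [hfun] at h
  have hc2 : HasSum (fun n : ℕ => 4 * cc (n+1) * t^(2*(n+1)+2)) (4*t*a - 4*t^2) := by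
    apply (hasSum_nat_add_iff (f := fun n => 4 * cc n * t^(2*n+2)) 1).2
    have hv : 4*t*a - 4*t^2 + ∑ i ∈ range 1, 4 * cc i * t^(2*i+2) = 4*t*a := by
      simp [cc, dd]
    rwa [hv]
  have he1 : HasSum (fun n => 4 * ee n * t^(2*n)) (4*s) := by
    have h := hE.mul_left 4
    have hfun : (fun n : ℕ => 4*(ee n * t^(2*n))) = (fun n : ℕ => 4 * ee n * t^(2*n)) := by
      funext n
      ring
    rwa [hfun] at h
  have he2 : HasSum (fun n : ℕ => 4 * ee (n+2) * t^(2*(n+2))) (4*s - 4 - 2*t^2) := by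
    apply (hasSum_nat_add_iff (f := fun n => 4 * ee n * t^(2*n)) 2).2
    have hv : 4*s - 4 - 2*t^2 + ∑ i ∈ range 2, 4 * ee i * t^(2*i) = 4*s := by
      rw [Finset.sum_range_succ, Finset.sum_range_one]
      rw [show ee 0 = 1 from rfl, show ee 1 = dd 0 / (2*((0:ℕ):ℝ)+2) from rfl,
        show dd 0 = 1 from rfl]
      push_cast
      ring
    rwa [hv]
  have heven' := hc2.sub he2
  have heven : HasSum (fun j : ℕ => f (2*j)) ((4*t*a - 4*t^2) - (4*s - 4 - 2*t^2)) := by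
    have hfun : (fun j : ℕ => f (2*j))
        = (fun j : ℕ => 4 * cc (j+1) * t^(2*(j+1)+2) - 4 * ee (j+2) * t^(2*(j+2))) := by
      funext j
      rw [hf]
      simp only
      have e1 : 2*j + 3 - 1 = 2*j+2 := by omega
      have e2 : 2*j + 3 + 1 = 2*j+4 := by omega
      rw [e1, e2, coeff_even j t]
      have e3 : 2*(j+1)+2 = 2*j+4 := by omega
      have e4 : 2*(j+2) = 2*j+4 := by omega
      rw [e3, e4]
      ring
    rwa [hfun]
  -- odd part
  have ho1 : HasSum (fun n => -4 * hh n * t^(2*n+1)) (-4*(a*s)) := by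
    have h := hH.mul_left (-4)
    have hfun : (fun n : ℕ => -4*(hh n * t^(2*n+1))) = (fun n : ℕ => -4 * hh n * t^(2*n+1)) := by
      funext n
      ring
    rwa [hfun] at h
  have ho2 : HasSum (fun n : ℕ => -4 * hh (n+2) * t^(2*(n+2)+1))
      (-4*(a*s) + 4*t + (4/3)*t^3) := by
    apply (hasSum_nat_add_iff (f := fun n => -4 * hh n * t^(2*n+1)) 2).2
    have hv : -4*(a*s) + 4*t + (4/3)*t^3 + ∑ i ∈ range 2, -4 * hh i * t^(2*i+1) = -4*(a*s) := by
      rw [Finset.sum_range_succ, Finset.sum_range_one]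
      rw [show hh 0 = 1 from rfl, show hh 1 = 1/3 from rfl]
      push_cast
      ring
    rwa [hv]
  have hodd : HasSum (fun j : ℕ => f (2*j+1)) (-4*(a*s) + 4*t + (4/3)*t^3) := by
    have hfun : (fun j : ℕ => f (2*j+1))
        = (fun j : ℕ => -4 * hh (j+2) * t^(2*(j+2)+1)) := by
      funext j
      rw [hf]
      simp only
      have e1 : 2*j + 1 + 3 - 1 = 2*j+3 := by omega
      have e2 : 2*j + 1 + 3 + 1 = 2*j+5 := by omega
      rw [e1, e2, coeff_odd j t]
      have e3 : 2*(j+2)+1 = 2*j+5 := by omega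
      rw [e3]
    rwa [hfun]
  refine ⟨((4*t*a - 4*t^2) - (4*s - 4 - 2*t^2)) + (-4*(a*s) + 4*t + (4/3)*t^3),
    heven.even_add_odd hodd, ?_⟩
  -- closed form of the incomplete gamma function
  have hg : incGamma 2 a = (1 + a) * Real.exp (-a) := by
    rw [incGamma]
    have : ∀ u : ℝ, Real.exp (-u) * u ^ (2-1) = Real.exp (-u) * u := by
      intro u
      norm_num
    simp_rw [this]
    exact incGamma_two a
  have hexp : Real.exp (-a) = s - t := by
    have h1 : Real.exp a = t + s := by
      rw [ha, hs, Real.exp_arsinh]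
    have hmul : (t + s) * (s - t) = 1 := by
      have : s^2 = 1 + t^2 := by
        rw [hs]
        exact Real.sq_sqrt (by positivity)
      nlinarith [this]
    rw [Real.exp_neg, h1]
    field_simp [show t + s ≠ 0 from by intro h0; rw [h0] at hmul; simp at hmul]
    nlinarith [hmul]
  rw [hg, hexp]
  ring
end

section
/- For every positive integer n and every real number t with |t| < 1, one has the convergent Maclaurin series expansion (arctanh t)^n = n! · Σ_{k=0}^∞ S_{n−1}(k) · t^{2k+n}/(2k+n), where arctanh t = (1/2)·ln((1+t)/(1−t)) is the inverse hyperbolic tangent and the nested harmonic-type sums S_m(j) are defined by S_0(j) = 1 and S_m(j) = Σ_{i=0}^{j} S_{m−1}(i)/(2i+m) for m ≥ 1. -/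
/-- The nested harmonic-type sums: `S 0 j = 1` and
`S (m+1) j = ∑_{i=0}^{j} S m i / (2i + (m+1))`. -/
noncomputable def nestedS : ℕ → ℕ → ℝ
  | 0, _ => 1
  | m + 1, j => ∑ i ∈ Finset.range (j + 1), nestedS m i / (2 * (i : ℝ) + ((m : ℝ) + 1))

lemma nestedS_nonneg (m k : ℕ) : 0 ≤ nestedS m k := by
  induction m generalizing k with
  | zero => simp [nestedS]
  | succ m ih =>
    rw [nestedS]
    refine Finset.sum_nonneg fun i _ => div_nonneg (ih i) (by positivity)

lemma nestedS_le (m k : ℕ) : nestedS m k ≤ ((k : ℝ) + 1) ^ m := by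
  induction m generalizing k with
  | zero => simp [nestedS]
  | succ m ih =>
    rw [nestedS]
    calc ∑ i ∈ Finset.range (k + 1), nestedS m i / (2 * (i : ℝ) + ((m : ℝ) + 1))
        ≤ ∑ i ∈ Finset.range (k + 1), ((k : ℝ) + 1) ^ m := by
          refine Finset.sum_le_sum fun i hi => ?_
          have hi' : (i : ℝ) ≤ (k : ℝ) := by
            exact_mod_cast Nat.lt_succ_iff.mp (Finset.mem_range.mp hi)
          have h1 : nestedS m i / (2 * (i : ℝ) + ((m : ℝ) + 1)) ≤ nestedS m i := by
            apply div_le_self (nestedS_nonneg m i)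
            have : (0:ℝ) ≤ (i:ℝ) := Nat.cast_nonneg i
            have : (0:ℝ) ≤ (m:ℝ) := Nat.cast_nonneg m
            linarith
          refine h1.trans ((ih i).trans ?_)
          exact pow_le_pow_left₀ (by positivity) (by linarith) m
      _ = ((k : ℝ) + 1) ^ (m + 1) := by
          rw [Finset.sum_const, Finset.card_range]
          push_cast
          ring

lemma summable_poly_geom (m : ℕ) {x : ℝ} (h0 : 0 ≤ x) (h1 : x < 1) :
    Summable (fun k : ℕ => ((k : ℝ) + 1) ^ m * x ^ k) := by
  rcases eq_or_lt_of_le h0 with rfl | hx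
  · apply summable_of_ne_finset_zero (s := {0})
    intro k hk
    have : k ≠ 0 := by simpa using hk
    simp [zero_pow this]
  · have hs : Summable (fun n : ℕ => (n : ℝ) ^ m * x ^ n) :=
      summable_pow_mul_geometric_of_norm_lt_one m (by rwa [Real.norm_eq_abs, abs_of_pos hx])
    have hs1 : Summable (fun n : ℕ => ((n : ℝ) + 1) ^ m * x ^ (n + 1)) := by
      have := (summable_nat_add_iff 1).2 hs
      refine this.congr fun n => ?_
      push_cast
      ring
    have := hs1.mul_left x⁻¹
    refine this.congr fun n => ?_
    field_simp
    ring

lemma summable_S_aux (m c : ℕ) {x : ℝ} (h0 : 0 ≤ x) (h1 : x < 1) :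
    Summable (fun k : ℕ => ((k : ℝ) + 1) ^ m * x ^ (2 * k + c)) := by
  have hx2 : x ^ 2 < 1 := by nlinarith
  have := (summable_poly_geom m (by positivity) hx2).mul_right (x ^ c)
  refine this.congr fun k => ?_
  rw [pow_add, pow_mul]
  ring

lemma summable_S (m c : ℕ) {t : ℝ} (ht : |t| < 1) (d : ℕ → ℝ) (hd : ∀ k, 1 ≤ d k) :
    Summable (fun k : ℕ => nestedS m k * t ^ (2 * k + c) / d k) := by
  refine Summable.of_norm_bounded (summable_S_aux m c (abs_nonneg t) ht) fun k => ?_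
  rw [norm_div, norm_mul, Real.norm_eq_abs, Real.norm_eq_abs, Real.norm_eq_abs,
    abs_of_nonneg (nestedS_nonneg m k), abs_pow]
  have hdk := hd k
  have hnum : 0 ≤ nestedS m k * |t| ^ (2 * k + c) :=
    mul_nonneg (nestedS_nonneg m k) (by positivity)
  calc nestedS m k * |t| ^ (2 * k + c) / |d k|
      ≤ nestedS m k * |t| ^ (2 * k + c) := by
        apply div_le_self hnum
        rw [abs_of_nonneg (by linarith)]; linarith
    _ ≤ ((k : ℝ) + 1) ^ m * |t| ^ (2 * k + c) :=
        mul_le_mul_of_nonneg_right (nestedS_le m k) (by positivity)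

noncomputable def gfun (m : ℕ) (t : ℝ) : ℝ :=
  ∑' k : ℕ, nestedS m k * t ^ (2 * k + m + 1) / (2 * (k : ℝ) + (m : ℝ) + 1)

lemma summable_gfun (m : ℕ) {t : ℝ} (ht : |t| < 1) :
    Summable (fun k : ℕ => nestedS m k * t ^ (2 * k + m + 1) / (2 * (k : ℝ) + (m : ℝ) + 1)) := by
  have := summable_S m (m + 1) ht (fun k => 2 * (k : ℝ) + (m : ℝ) + 1)
    (fun k => by
      have h1 : (0:ℝ) ≤ (k:ℝ) := Nat.cast_nonneg k
      have h2 : (0:ℝ) ≤ (m:ℝ) := Nat.cast_nonneg m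
      show (1:ℝ) ≤ 2 * (k:ℝ) + (m:ℝ) + 1
      linarith)
  refine this.congr fun k => ?_
  rw [show 2 * k + (m + 1) = 2 * k + m + 1 from rfl]

lemma summable_dS (m c : ℕ) {t : ℝ} (ht : |t| < 1) :
    Summable (fun k : ℕ => nestedS m k * t ^ (2 * k + c)) := by
  have := summable_S m c ht (fun _ => 1) (fun _ => le_refl 1)
  simpa using this

lemma hasDerivAt_gfun (m : ℕ) {t : ℝ} (ht : |t| < 1) :
    HasDerivAt (gfun m) (∑' k : ℕ, nestedS m k * t ^ (2 * k + m)) t := by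
  set r : ℝ := (1 + |t|) / 2 with hr
  have hr0 : 0 < r := by positivity
  have hrt : |t| < r := by rw [hr]; linarith
  have hr1 : r < 1 := by rw [hr]; linarith
  have hmem : t ∈ Metric.ball (0 : ℝ) r := by
    simpa [Real.norm_eq_abs] using hrt
  refine hasDerivAt_tsum_of_isPreconnected
    (u := fun k : ℕ => ((k : ℝ) + 1) ^ m * r ^ (2 * k + m))
    (summable_S_aux m m hr0.le hr1) Metric.isOpen_ball
    (convex_ball (0:ℝ) r).isPreconnected
    (g' := fun k y => nestedS m k * y ^ (2 * k + m)) ?_ ?_ hmem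
    (summable_gfun m ht) hmem
  · intro k y _
    have hd : (2 * (k : ℝ) + (m : ℝ) + 1) ≠ 0 := by positivity
    have h1 := ((hasDerivAt_pow (2 * k + m + 1) y).const_mul (nestedS m k)).div_const
      (2 * (k : ℝ) + (m : ℝ) + 1)
    convert h1 using 1
    case e'_4 => rfl
    rw [show 2 * k + m + 1 - 1 = 2 * k + m from rfl]
    push_cast
    field_simp
  · intro k y hy
    have hy' : |y| ≤ r := by
      rw [Metric.mem_ball, Real.dist_eq, sub_zero] at hy
      exact hy.le
    rw [Real.norm_eq_abs, abs_mul, abs_of_nonneg (nestedS_nonneg m k), abs_pow]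
    exact mul_le_mul (nestedS_le m k) (pow_le_pow_left₀ (abs_nonneg y) hy' _)
      (by positivity) (by positivity)

lemma hasSum_shift (m : ℕ) {x : ℝ} (hx : |x| < 1) :
    HasSum (fun k : ℕ => nestedS m k * x ^ (2 * k + m + 1) / (2 * (k : ℝ) + (m : ℝ) + 1))
      ((1 - x ^ 2) * ∑' k : ℕ, nestedS (m + 1) k * x ^ (2 * k + (m + 1))) := by
  set f : ℕ → ℝ := fun k => nestedS (m + 1) k * x ^ (2 * k + (m + 1)) with hf
  have hA : HasSum f (∑' k, f k) := (summable_dS (m + 1) (m + 1) hx).hasSum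
  set a : ℝ := ∑' k, f k with ha
  have h2 : HasSum (fun k => x ^ 2 * f k) (x ^ 2 * a) := hA.mul_left _
  set g : ℕ → ℝ := fun k =>
    if k = 0 then 0 else nestedS (m + 1) (k - 1) * x ^ (2 * k + m + 1) with hg
  have h3 : HasSum (fun k => g (k + 1)) (x ^ 2 * a) := by
    refine h2.congr_fun fun k => ?_
    simp only [hg, hf, Nat.succ_ne_zero, if_false, Nat.add_sub_cancel]
    rw [show 2 * (k + 1) + m + 1 = (2 * k + (m + 1)) + 2 by ring, pow_add]
    ring
  have h4 : HasSum g (x ^ 2 * a) := by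
    have := (hasSum_nat_add_iff (f := g) 1).1 h3
    simpa [hg] using this
  have h5 : HasSum (fun k => f k - g k) (a - x ^ 2 * a) := hA.sub h4
  have h6 : ∀ k, f k - g k =
      nestedS m k * x ^ (2 * k + m + 1) / (2 * (k : ℝ) + (m : ℝ) + 1) := by
    intro k
    cases k with
    | zero =>
      simp only [hf, hg, if_true]
      rw [show nestedS (m + 1) 0 = nestedS m 0 / (2 * (0 : ℝ) + ((m : ℝ) + 1)) by
        rw [nestedS]; simp]
      push_cast
      ring
    | succ j =>
      simp only [hf, hg, Nat.succ_ne_zero, if_false, Nat.add_sub_cancel]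
      have hrec : nestedS (m + 1) (j + 1) =
          nestedS (m + 1) j + nestedS m (j + 1) / (2 * ((j : ℝ) + 1) + ((m : ℝ) + 1)) := by
        rw [nestedS, nestedS, Finset.sum_range_succ]
        push_cast
        ring
      rw [hrec]
      have : 2 * (j + 1) + (m + 1) = 2 * (j + 1) + m + 1 := rfl
      rw [this]
      push_cast
      ring
  have h7 := h5.congr_fun fun k => (h6 k).symm
  convert h7 using 1
  ring

noncomputable def ath (t : ℝ) : ℝ := 1 / 2 * Real.log ((1 + t) / (1 - t))

lemma hasDerivAt_ath {x : ℝ} (hx : |x| < 1) : HasDerivAt ath (1 / (1 - x ^ 2)) x := by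
  obtain ⟨hx1, hx2⟩ := abs_lt.mp hx
  have hp : (0:ℝ) < 1 + x := by linarith
  have hq : (0:ℝ) < 1 - x := by linarith
  have hl1 : HasDerivAt (fun y : ℝ => Real.log (1 + y)) (1 / (1 + x)) x :=
    ((hasDerivAt_id x).const_add 1).log hp.ne'
  have hl2 : HasDerivAt (fun y : ℝ => Real.log (1 - y)) ((-1) / (1 - x)) x :=
    ((hasDerivAt_id x).const_sub 1).log hq.ne'
  have h : HasDerivAt (fun y : ℝ => 1 / 2 * (Real.log (1 + y) - Real.log (1 - y)))
      (1 / (1 - x ^ 2)) x := by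
    convert (hl1.sub hl2).const_mul (1 / 2 : ℝ) using 1
    case e'_4 => rfl
    case e'_5 => rfl
    case e'_8 => rfl
    have h1 : (1:ℝ) + x ≠ 0 := hp.ne'
    have h2 : (1:ℝ) - x ≠ 0 := hq.ne'
    have h3 : (1:ℝ) - x ^ 2 ≠ 0 := by nlinarith
    field_simp
    ring
  refine h.congr_of_eventuallyEq ?_
  have hmem : Set.Ioo (-1 : ℝ) 1 ∈ nhds x := (isOpen_Ioo).mem_nhds ⟨hx1, hx2⟩
  filter_upwards [hmem] with y hy
  obtain ⟨hy1, hy2⟩ := hy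
  rw [ath, Real.log_div (by linarith) (by linarith)]

lemma key_sum_zero {x : ℝ} (hx : |x| < 1) :
    ∑' k : ℕ, nestedS 0 k * x ^ (2 * k + 0) = 1 / (1 - x ^ 2) := by
  have hx2 : x ^ 2 < 1 := by nlinarith [abs_nonneg x, abs_lt.mp hx]
  have hgeo : HasSum (fun k : ℕ => (x ^ 2) ^ k) (1 - x ^ 2)⁻¹ :=
    hasSum_geometric_of_lt_one (by positivity) hx2
  have := hgeo.tsum_eq
  rw [one_div]
  rw [← this]
  refine tsum_congr fun k => ?_
  rw [nestedS]
  rw [Nat.add_zero, pow_mul]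
  ring

lemma gfun_zero_eq (m : ℕ) : gfun m 0 = 0 := by
  rw [gfun]
  have h : ∀ k : ℕ, nestedS m k * (0:ℝ) ^ (2 * k + m + 1) / (2 * (k : ℝ) + (m : ℝ) + 1)
      = 0 := by
    intro k
    rw [zero_pow (by omega)]
    ring
  rw [tsum_congr h, tsum_zero]

lemma ath_zero : ath 0 = 0 := by simp [ath]

lemma main_step (m : ℕ)
    (key : ∀ x : ℝ, |x| < 1 → ∑' k : ℕ, nestedS m k * x ^ (2 * k + m) =
      ath x ^ m / ((m.factorial : ℝ) * (1 - x ^ 2)))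
    (t : ℝ) (ht : |t| < 1) :
    ath t ^ (m + 1) = ((m + 1).factorial : ℝ) * gfun m t := by
  set r : ℝ := (1 + |t|) / 2 with hr
  have hr0 : 0 < r := by positivity
  have hrt : |t| < r := by rw [hr]; linarith
  have hr1 : r < 1 := by rw [hr]; linarith
  set s : Set ℝ := Metric.ball (0 : ℝ) r with hs
  set h : ℝ → ℝ := fun y => ath y ^ (m + 1) / ((m + 1).factorial : ℝ) - gfun m y with hh
  have hball : ∀ x ∈ s, |x| < 1 := by
    intro x hx
    rw [hs, Metric.mem_ball, Real.dist_eq, sub_zero] at hx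
    exact hx.trans hr1
  have hfacm : ((m).factorial : ℝ) ≠ 0 := by exact_mod_cast Nat.factorial_ne_zero m
  have hfacm1 : (((m + 1)).factorial : ℝ) ≠ 0 := by
    exact_mod_cast Nat.factorial_ne_zero (m + 1)
  have hderiv : ∀ x ∈ s, HasDerivAt h 0 x := by
    intro x hx
    have hx1 : |x| < 1 := hball x hx
    have hx2 : (1:ℝ) - x ^ 2 ≠ 0 := by
      have := abs_lt.mp hx1
      nlinarith
    have hd := (((hasDerivAt_ath hx1).pow (m + 1)).div_const
      (((m + 1)).factorial : ℝ)).sub (hasDerivAt_gfun m hx1)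
    rw [key x hx1] at hd
    convert hd using 1
    case e'_4 => rfl
    case e'_5 => rfl
    case e'_8 => rfl
    have hfs : (((m + 1)).factorial : ℝ) = ((m : ℝ) + 1) * (m.factorial : ℝ) := by
      rw [Nat.factorial_succ]
      push_cast
      ring
    rw [hfs]
    rw [show (m + 1 - 1 : ℕ) = m from rfl]
    push_cast
    field_simp
    ring
  have hdiff : DifferentiableOn ℝ h s := fun x hx =>
    ((hderiv x hx).differentiableAt).differentiableWithinAt
  have hfz : ∀ x ∈ s, fderivWithin ℝ h s x = 0 := by
    intro x hx
    rw [fderivWithin_of_isOpen Metric.isOpen_ball hx, ((hderiv x hx).hasFDerivAt).fderiv]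
    ext y
    simp
  have htmem : t ∈ s := by
    rw [hs, Metric.mem_ball, Real.dist_eq, sub_zero]; exact hrt
  have h0mem : (0:ℝ) ∈ s := by
    rw [hs, Metric.mem_ball, dist_self]; exact hr0
  have hconst := (convex_ball (0:ℝ) r).is_const_of_fderivWithin_eq_zero hdiff hfz htmem h0mem
  have h0 : h 0 = 0 := by
    rw [hh]
    simp [ath_zero, gfun_zero_eq]
  rw [h0] at hconst
  have h2 := sub_eq_zero.mp hconst
  rw [div_eq_iff hfacm1] at h2
  linarith [h2]

lemma main_ind : ∀ m : ℕ, ∀ t : ℝ, |t| < 1 →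
    ath t ^ (m + 1) = ((m + 1).factorial : ℝ) * gfun m t := by
  intro m
  induction m with
  | zero =>
    intro t ht
    -- key derivative-sum identity for m = 0
    have key : ∀ x : ℝ, |x| < 1 →
        ∑' k : ℕ, nestedS 0 k * x ^ (2 * k + 0) =
          ath x ^ 0 / (((0:ℕ).factorial : ℝ) * (1 - x ^ 2)) := by
      intro x hx
      rw [key_sum_zero hx]
      simp
    exact main_step 0 key t ht
  | succ m ih =>
    intro t ht
    have key : ∀ x : ℝ, |x| < 1 →
        ∑' k : ℕ, nestedS (m + 1) k * x ^ (2 * k + (m + 1)) =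
          ath x ^ (m + 1) / (((m + 1).factorial : ℝ) * (1 - x ^ 2)) := by
      intro x hx
      have hx2 : (1:ℝ) - x ^ 2 ≠ 0 := by
        have := abs_lt.mp hx
        nlinarith
      have hshift := (hasSum_shift m hx).tsum_eq
      have hgf : gfun m x = (1 - x ^ 2) * ∑' k : ℕ, nestedS (m + 1) k * x ^ (2 * k + (m + 1)) := by
        rw [gfun, hshift]
      have hih := ih x hx
      rw [hgf] at hih
      have hfac : ((m + 1).factorial : ℝ) ≠ 0 := by
        exact_mod_cast Nat.factorial_ne_zero (m + 1)
      field_simp at hih ⊢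
      linarith [hih]
    exact main_step (m + 1) key t ht

/-- Maclaurin series for `(arctanh t)^n` where `arctanh t = (1/2) ln((1+t)/(1−t))`:
`(arctanh t)^n = n! ∑_{k=0}^∞ S_{n−1}(k) t^{2k+n}/(2k+n)`. -/
theorem artanh_pow_maclaurin (n : ℕ) (hn : 1 ≤ n) (t : ℝ) (ht : |t| < 1) :
    ∃ S : ℝ,
      HasSum (fun k : ℕ =>
        nestedS (n - 1) k * t ^ (2 * k + n) / ((2 * k + n : ℕ) : ℝ)) S ∧
      (1 / 2 * Real.log ((1 + t) / (1 - t))) ^ n = (n.factorial : ℝ) * S := by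
  obtain ⟨m, rfl⟩ : ∃ m, n = m + 1 := ⟨n - 1, by omega⟩
  refine ⟨gfun m t, ?_, ?_⟩
  · have hsum := (summable_gfun m ht).hasSum
    refine hsum.congr_fun fun k => ?_
    rw [show m + 1 - 1 = m from rfl]
    push_cast
    ring_nf
  · exact main_ind m t ht
end
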